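/- Let d, l ≥ 2 be integers and let C > 0. Then there exists C' > 0 such that for all monic and centered polynomials P, Q ∈ ℂ[z] with deg P = d and deg Q = l: if every coefficient of P∘Q has absolute value at most C, then every coefficient of P and every coefficient of Q has absolute value at most C'. (This expresses the properness of the composition map (P,Q) ↦ P∘Q on spaces of monic and centered complex polynomials.) -/

import Mathlib

open Polynomial

lemma root_norm_le (p : ℂ[X]) (hp : p.Monic) (C : ℝ) (hC : 0 ≤ C)
    (h : ∀ k, ‖p.coeff k‖ ≤ C) (z : ℂ) (hz : p.eval z = 0) :
    ‖z‖ ≤ 1 + C := by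
  have h1 := Polynomial.IsRoot.norm_lt_cauchyBound hp.ne_zero hz
  have h2 : p.cauchyBound ≤ C.toNNReal + 1 := by
    unfold Polynomial.cauchyBound
    rw [hp.leadingCoeff]
    simp only [nnnorm_one, div_one]
    gcongr
    apply Finset.sup_le
    intro i _
    rw [← NNReal.coe_le_coe, Real.coe_toNNReal _ hC, coe_nnnorm]
    exact h i
  have := (h1.trans_le h2).le
  rw [← NNReal.coe_le_coe] at this
  simp only [coe_nnnorm, NNReal.coe_add, Real.coe_toNNReal _ hC,
    NNReal.coe_one] at this
  linarith

lemma sum_map_const_sub (s : Multiset ℂ) (a : ℂ) :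
    (s.map (fun c => a - c)).sum = s.card • a - s.sum := by
  induction s using Multiset.induction_on with
  | empty => simp
  | cons x s ih => simp [ih, add_smul, succ_nsmul]; ring

theorem stmt19 (d l : ℕ) (hd : 2 ≤ d) (hl : 2 ≤ l) (C : ℝ) (hC : 0 < C) :
    ∃ C' : ℝ, 0 < C' ∧ ∀ P Q : Polynomial ℂ,
      P.natDegree = d → P.Monic → P.coeff (d - 1) = 0 →
      Q.natDegree = l → Q.Monic → Q.coeff (l - 1) = 0 →
      (∀ k : ℕ, ‖(P.comp Q).coeff k‖ ≤ C) →
      (∀ k : ℕ, ‖P.coeff k‖ ≤ C') ∧ (∀ k : ℕ, ‖Q.coeff k‖ ≤ C') := by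
  set R : ℝ := 1 + C with hR
  have hR1 : 1 ≤ R := by simp only [hR]; linarith
  set M : ℝ := max R 1 ^ l * (l.choose (l / 2) : ℝ) with hM
  have hM0 : 0 < M := by
    apply mul_pos (by positivity)
    exact_mod_cast Nat.choose_pos (Nat.div_le_self l 2)
  refine ⟨max (2 * M) 1 ^ d * (d.choose (d / 2) : ℝ) + M + 1, by positivity, ?_⟩
  intro P Q hPd hPm hPc hQd hQm hQc hPQ
  have hld : Q.natDegree ≠ 0 := by rw [hQd]; omega
  have hcm : (P.comp Q).Monic := hPm.comp hQm hld
  have hroot : ∀ z : ℂ, (P.comp Q).eval z = 0 → ‖z‖ ≤ R :=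
    fun z hz => root_norm_le _ hcm C hC.le hPQ z hz
  -- coefficients of Q - C c are bounded by M for any root c of P
  have key : ∀ c ∈ P.roots, ∀ i, ‖(Q - Polynomial.C c).coeff i‖ ≤ M := by
    intro c hc i
    have hfm : (Q - Polynomial.C c).Monic := hQm.sub_of_left
      (lt_of_le_of_lt degree_C_le (natDegree_pos_iff_degree_pos.mp (by omega)))
    have hfd : (Q - Polynomial.C c).natDegree = l := by rw [natDegree_sub_C, hQd]
    have hroots : ∀ z ∈ ((Q - Polynomial.C c).map (RingHom.id ℂ)).roots, ‖z‖ ≤ R := by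
      intro z hz
      rw [Polynomial.map_id] at hz
      have hz' := isRoot_of_mem_roots hz
      rw [IsRoot.def, eval_sub, eval_C, sub_eq_zero] at hz'
      exact hroot z (by rw [eval_comp, hz']; exact isRoot_of_mem_roots hc)
    have hb := coeff_bdd_of_roots_le (RingHom.id ℂ) hfm
      (IsAlgClosed.splits _) (le_of_eq hfd) hroots i
    rw [Polynomial.map_id] at hb
    exact hb.trans_eq rfl
  have hcard : P.roots.card = d := by
    rw [← hPd]; exact splits_iff_card_roots.mp (IsAlgClosed.splits P)
  obtain ⟨c0, hc0⟩ : ∃ c, c ∈ P.roots := by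
    apply Multiset.card_pos_iff_exists_mem.mp; rw [hcard]; omega
  have hQk : ∀ i, 1 ≤ i → ‖Q.coeff i‖ ≤ M := by
    intro i hi
    have h := key c0 hc0 i
    rwa [coeff_sub, coeff_C, if_neg (by omega), sub_zero] at h
  have hsum : P.roots.sum = 0 := by
    have h := (IsAlgClosed.splits P).nextCoeff_eq_neg_sum_roots_of_monic hPm
    rw [nextCoeff_of_natDegree_pos (by omega), hPd, hPc] at h
    exact neg_eq_zero.mp h.symm
  have hcoeff0 : ∀ c ∈ P.roots, ‖Q.coeff 0 - c‖ ≤ M := by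
    intro c hc
    have h := key c hc 0
    rwa [coeff_sub, coeff_C, if_pos rfl] at h
  have hq0 : ‖Q.coeff 0‖ ≤ M := by
    have h1 : (P.roots.map (fun c => Q.coeff 0 - c)).sum = (d : ℂ) * Q.coeff 0 := by
      rw [sum_map_const_sub, hsum, hcard, sub_zero, nsmul_eq_mul]
    have h2 : ‖(P.roots.map (fun c => Q.coeff 0 - c)).sum‖ ≤ (d : ℝ) * M := by
      refine (norm_multiset_sum_le _).trans ?_
      have := Multiset.sum_le_card_nsmul ((P.roots.map (fun c => Q.coeff 0 - c)).map norm) M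
        (by
          intro x hx
          simp only [Multiset.map_map, Multiset.mem_map, Function.comp] at hx
          obtain ⟨c, hc, rfl⟩ := hx
          exact hcoeff0 c hc)
      simpa [hcard, nsmul_eq_mul] using this
    rw [h1] at h2
    rw [norm_mul, Complex.norm_natCast] at h2
    have hd0 : (0:ℝ) < d := by positivity
    calc ‖Q.coeff 0‖ = ((d:ℝ) * ‖Q.coeff 0‖) / d := by
          field_simp
      _ ≤ ((d:ℝ) * M) / d := by gcongr
      _ = M := by field_simp
  have hPr : ∀ z ∈ (P.map (RingHom.id ℂ)).roots, ‖z‖ ≤ 2 * M := by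
    intro z hz
    rw [Polynomial.map_id] at hz
    have h := hcoeff0 z hz
    calc ‖z‖ = ‖Q.coeff 0 - (Q.coeff 0 - z)‖ := by ring_nf
      _ ≤ ‖Q.coeff 0‖ + ‖Q.coeff 0 - z‖ := norm_sub_le _ _
      _ ≤ M + M := by
          exact add_le_add hq0 h
      _ = 2 * M := by ring
  have hMC' : M ≤ max (2 * M) 1 ^ d * (d.choose (d / 2) : ℝ) + M + 1 := by
    have : (0:ℝ) ≤ max (2 * M) 1 ^ d * (d.choose (d / 2) : ℝ) := by positivity
    linarith
  constructor
  · intro k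
    have hb := coeff_bdd_of_roots_le (RingHom.id ℂ) hPm
      (IsAlgClosed.splits _) (le_of_eq hPd) hPr k
    rw [Polynomial.map_id] at hb
    linarith
  · intro k
    rcases Nat.eq_zero_or_pos k with rfl | hk
    · exact hq0.trans hMC'
    · exact (hQk k hk).trans hMC'
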